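/- arXiv:1207.5091 — 3 statements merged into one kernel-verified Lean document; each statement's English description precedes it below -/
import Mathlib

section
/- For finite sets S₁, S₂, distributions μ₁ ∈ Dist(S₁), μ₂ ∈ Dist(S₂), and a relation R ⊆ S₁ × S₂, there exists a weight function w : S₁ × S₂ → ℚ ∩ [0,1] satisfying (1) μ₁(s₁) = Σ_{s₂} w(s₁,s₂) for all s₁, (2) μ₂(s₂) = Σ_{s₁} w(s₁,s₂) for all s₂, and (3) w(s₁,s₂) > 0 implies s₁ R s₂, if and only if for every subset S ⊆ supp(μ₁), μ₁(S) ≤ μ₂(R(S)), where R(S) = {s₂ | ∃ s₁ ∈ S, s₁ R s₂}. -/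
open Finset
open scoped Classical

noncomputable def NRel {S₁ S₂ : Type} [Fintype S₂] (R : S₁ → S₂ → Prop) (T : Finset S₁) : Finset S₂ :=
  Finset.univ.filter (fun t => ∃ s ∈ T, R s t)

lemma mem_NRel {S₁ S₂ : Type} [Fintype S₂] (R : S₁ → S₂ → Prop) (T : Finset S₁) (t : S₂) :
    t ∈ NRel R T ↔ ∃ s ∈ T, R s t := by
  simp [NRel]

lemma NRel_mono {S₁ S₂ : Type} [Fintype S₂] (R : S₁ → S₂ → Prop) {T U : Finset S₁}
    (h : T ⊆ U) : NRel R T ⊆ NRel R U := by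
  intro t ht
  rw [mem_NRel] at ht ⊢
  obtain ⟨s, hs, hR⟩ := ht
  exact ⟨s, h hs, hR⟩

lemma NRel_union {S₁ S₂ : Type} [Fintype S₂] (R : S₁ → S₂ → Prop) (T U : Finset S₁) :
    NRel R (T ∪ U) = NRel R T ∪ NRel R U := by
  ext t
  simp only [mem_NRel, mem_union]
  aesop

lemma core_nat {S₁ S₂ : Type} [Fintype S₁] [Fintype S₂] (R : S₁ → S₂ → Prop) :
    ∀ (n : ℕ) (ν₁ : S₁ → ℕ) (ν₂ : S₂ → ℕ),
      (∑ s, ν₁ s = n) → (∑ t, ν₂ t = n) →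
      (∀ T : Finset S₁, ∑ s ∈ T, ν₁ s ≤ ∑ t ∈ NRel R T, ν₂ t) →
      ∃ w : S₁ → S₂ → ℕ,
        (∀ s₁, ∑ s₂, w s₁ s₂ = ν₁ s₁) ∧
        (∀ s₂, ∑ s₁, w s₁ s₂ = ν₂ s₂) ∧
        (∀ s₁ s₂, 0 < w s₁ s₂ → R s₁ s₂) := by
  intro n
  induction n with
  | zero =>
    intro ν₁ ν₂ h1 h2 _
    refine ⟨fun _ _ => 0, ?_, ?_, ?_⟩
    · intro s₁
      have := (Finset.sum_eq_zero_iff.mp h1) s₁ (mem_univ _)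
      simp [this]
    · intro s₂
      have := (Finset.sum_eq_zero_iff.mp h2) s₂ (mem_univ _)
      simp [this]
    · intro s₁ s₂ h
      exact absurd h (lt_irrefl 0)
  | succ m ih =>
    intro ν₁ ν₂ h1 h2 hall
    -- pick a with ν₁ a > 0
    have hex : ∃ a, 0 < ν₁ a := by
      by_contra h
      push_neg at h
      have : ∑ s, ν₁ s = 0 := Finset.sum_eq_zero (fun s _ => Nat.le_zero.mp (h s))
      omega
    obtain ⟨a, ha⟩ := hex
    -- tightness
    set Tight : Finset S₁ → Prop := fun T => ∑ s ∈ T, ν₁ s = ∑ t ∈ NRel R T, ν₂ t with hTight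
    have tight_union : ∀ T U, Tight T → Tight U → Tight (T ∪ U) := by
      intro T U hT hU
      have key : ∑ s ∈ T ∪ U, ν₁ s + ∑ s ∈ T ∩ U, ν₁ s
          ≥ ∑ t ∈ NRel R (T ∪ U), ν₂ t + ∑ s ∈ T ∩ U, ν₁ s := by
        have e1 : ∑ s ∈ T ∪ U, ν₁ s + ∑ s ∈ T ∩ U, ν₁ s = ∑ s ∈ T, ν₁ s + ∑ s ∈ U, ν₁ s :=
          Finset.sum_union_inter
        have e2 : ∑ t ∈ NRel R T ∪ NRel R U, ν₂ t + ∑ t ∈ NRel R T ∩ NRel R U, ν₂ t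
            = ∑ t ∈ NRel R T, ν₂ t + ∑ t ∈ NRel R U, ν₂ t := Finset.sum_union_inter
        have e3 : NRel R (T ∩ U) ⊆ NRel R T ∩ NRel R U := by
          intro t ht
          exact mem_inter.mpr ⟨NRel_mono R inter_subset_left ht, NRel_mono R inter_subset_right ht⟩
        have e4 : ∑ t ∈ NRel R (T ∩ U), ν₂ t ≤ ∑ t ∈ NRel R T ∩ NRel R U, ν₂ t :=
          Finset.sum_le_sum_of_subset e3
        have e5 : ∑ s ∈ T ∩ U, ν₁ s ≤ ∑ t ∈ NRel R (T ∩ U), ν₂ t := hall _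
        have e6 : NRel R (T ∪ U) = NRel R T ∪ NRel R U := NRel_union R T U
        rw [← e6] at e2
        simp only [hTight] at hT hU
        omega
      have h7 := hall (T ∪ U)
      simp only [hTight]
      omega
    -- Tstar
    set Tstar : Finset S₁ :=
      ((Finset.univ : Finset (Finset S₁)).filter (fun T => a ∉ T ∧ Tight T)).sup id with hTstar
    have hTstarP : a ∉ Tstar ∧ Tight Tstar := by
      rw [hTstar]
      refine Finset.sup_induction (p := fun X => a ∉ X ∧ Tight X) ?_ ?_ ?_
      · refine ⟨Finset.notMem_empty a, ?_⟩
        simp only [hTight]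
        have he : NRel R (∅ : Finset S₁) = ∅ := by
          ext t; simp [mem_NRel]
        simp [he]
      · intro T hT U hU
        refine ⟨?_, ?_⟩
        · rw [Finset.sup_eq_union]
          intro h
          rcases Finset.mem_union.mp h with h | h
          exacts [hT.1 h, hU.1 h]
        · rw [Finset.sup_eq_union]
          exact tight_union T U hT.2 hU.2
      · intro T hT
        exact (Finset.mem_filter.mp hT).2
    have hTstar_max : ∀ T, a ∉ T → Tight T → T ⊆ Tstar := by
      intro T haT hT
      exact Finset.le_sup (f := id) (Finset.mem_filter.mpr ⟨Finset.mem_univ T, haT, hT⟩)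
    -- find b
    have hexb : ∃ b, R a b ∧ 0 < ν₂ b ∧ b ∉ NRel R Tstar := by
      by_contra h
      push_neg at h
      have hzero : ∀ b ∈ NRel R {a} \ NRel R Tstar, ν₂ b = 0 := by
        intro b hb
        rw [mem_sdiff, mem_NRel] at hb
        obtain ⟨⟨s, hs, hR⟩, hnot⟩ := hb
        rw [mem_singleton] at hs
        subst hs
        by_contra hb0
        exact hnot (h b hR (by omega))
      have hins := hall (insert a Tstar)
      have e1 : ∑ s ∈ insert a Tstar, ν₁ s = ν₁ a + ∑ s ∈ Tstar, ν₁ s :=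
        Finset.sum_insert hTstarP.1
      have e2 : insert a Tstar = {a} ∪ Tstar := Finset.insert_eq a Tstar
      have e3 : NRel R (insert a Tstar) = NRel R Tstar ∪ (NRel R {a} \ NRel R Tstar) := by
        rw [e2, NRel_union]
        rw [Finset.union_comm (NRel R {a})]
        rw [Finset.union_sdiff_self_eq_union]
      have e4 : ∑ t ∈ NRel R (insert a Tstar), ν₂ t
          = ∑ t ∈ NRel R Tstar, ν₂ t + ∑ t ∈ NRel R {a} \ NRel R Tstar, ν₂ t := by
        rw [e3]
        exact Finset.sum_union (Finset.disjoint_sdiff)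
      have e5 : ∑ t ∈ NRel R {a} \ NRel R Tstar, ν₂ t = 0 :=
        Finset.sum_eq_zero hzero
      have e6 := hTstarP.2
      simp only [hTight] at e6
      omega
    obtain ⟨b, hRab, hb, hbnot⟩ := hexb
    -- decrement
    set ν₁' : S₁ → ℕ := Function.update ν₁ a (ν₁ a - 1) with hν₁'
    set ν₂' : S₂ → ℕ := Function.update ν₂ b (ν₂ b - 1) with hν₂'
    have sum1' : ∀ T : Finset S₁, a ∈ T → ∑ s ∈ T, ν₁' s = ∑ s ∈ T, ν₁ s - 1 := by
      intro T haT
      rw [← Finset.sum_erase_add _ _ haT, ← Finset.sum_erase_add _ _ haT]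
      have : ∀ s ∈ T.erase a, ν₁' s = ν₁ s := by
        intro s hs
        rw [hν₁', Function.update_of_ne (Finset.ne_of_mem_erase hs)]
      rw [Finset.sum_congr rfl this]
      have heta : (T.erase a).sum ν₁ = ∑ x ∈ T.erase a, ν₁ x := rfl
      rw [heta]
      have h1' : ν₁' a = ν₁ a - 1 := by rw [hν₁', Function.update_self]
      omega
    have sum1'' : ∀ T : Finset S₁, a ∉ T → ∑ s ∈ T, ν₁' s = ∑ s ∈ T, ν₁ s := by
      intro T haT
      apply Finset.sum_congr rfl
      intro s hs
      rw [hν₁', Function.update_of_ne (by rintro rfl; exact haT hs)]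
    have sum2' : ∀ T : Finset S₂, b ∈ T → ∑ s ∈ T, ν₂' s = ∑ s ∈ T, ν₂ s - 1 := by
      intro T hbT
      rw [← Finset.sum_erase_add _ _ hbT, ← Finset.sum_erase_add _ _ hbT]
      have : ∀ s ∈ T.erase b, ν₂' s = ν₂ s := by
        intro s hs
        rw [hν₂', Function.update_of_ne (Finset.ne_of_mem_erase hs)]
      rw [Finset.sum_congr rfl this]
      have heta : (T.erase b).sum ν₂ = ∑ x ∈ T.erase b, ν₂ x := rfl
      rw [heta]
      have h1' : ν₂' b = ν₂ b - 1 := by rw [hν₂', Function.update_self]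
      omega
    have sum2'' : ∀ T : Finset S₂, b ∉ T → ∑ s ∈ T, ν₂' s = ∑ s ∈ T, ν₂ s := by
      intro T hbT
      apply Finset.sum_congr rfl
      intro s hs
      rw [hν₂', Function.update_of_ne (by rintro rfl; exact hbT hs)]
    have htot1 : ∑ s, ν₁' s = m := by
      have := sum1' Finset.univ (mem_univ a)
      have h1le : 1 ≤ ∑ s, ν₁ s := by
        calc 1 ≤ ν₁ a := ha
        _ ≤ ∑ s, ν₁ s := Finset.single_le_sum (fun s _ => Nat.zero_le _) (mem_univ a)
      omega
    have htot2 : ∑ t, ν₂' t = m := by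
      have := sum2' Finset.univ (mem_univ b)
      have h1le : 1 ≤ ∑ t, ν₂ t := by
        calc 1 ≤ ν₂ b := hb
        _ ≤ ∑ t, ν₂ t := Finset.single_le_sum (fun t _ => Nat.zero_le _) (mem_univ b)
      omega
    have hall' : ∀ T : Finset S₁, ∑ s ∈ T, ν₁' s ≤ ∑ t ∈ NRel R T, ν₂' t := by
      intro T
      by_cases haT : a ∈ T
      · have hbT : b ∈ NRel R T := (mem_NRel R T b).mpr ⟨a, haT, hRab⟩
        rw [sum1' T haT, sum2' _ hbT]
        have := hall T
        omega
      · rw [sum1'' T haT]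
        by_cases hbT : b ∈ NRel R T
        · rw [sum2' _ hbT]
          have hnt : ¬ Tight T := by
            intro ht
            exact hbnot (NRel_mono R (hTstar_max T haT ht) hbT)
          have := hall T
          simp only [hTight] at hnt
          omega
        · rw [sum2'' _ hbT]
          exact hall T
    obtain ⟨w', hw1, hw2, hw3⟩ := ih ν₁' ν₂' htot1 htot2 hall'
    have hrow : ∀ x : S₁, ∑ y : S₂, (if x = a then (if y = b then 1 else 0) else 0)
        = if x = a then 1 else 0 := by
      intro x
      by_cases hx : x = a <;> simp [hx]
    have hcol : ∀ y : S₂, ∑ x : S₁, (if x = a then (if y = b then 1 else 0) else 0)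
        = if y = b then 1 else 0 := by
      intro y
      by_cases hy : y = b <;> simp [hy]
    refine ⟨fun x y => w' x y + (if x = a then (if y = b then 1 else 0) else 0), ?_, ?_, ?_⟩
    · intro s₁
      rw [Finset.sum_add_distrib, hw1, hrow]
      by_cases h : s₁ = a
      · subst h
        rw [if_pos rfl, hν₁', Function.update_self]
        omega
      · rw [if_neg h, hν₁', Function.update_of_ne h, add_zero]
    · intro s₂
      rw [Finset.sum_add_distrib, hw2, hcol]
      by_cases h : s₂ = b
      · subst h
        rw [if_pos rfl, hν₂', Function.update_self]
        omega
      · rw [if_neg h, hν₂', Function.update_of_ne h, add_zero]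
    · intro s₁ s₂ h
      simp only at h
      by_cases h2 : 0 < w' s₁ s₂
      · exact hw3 _ _ h2
      · have hz : w' s₁ s₂ = 0 := by omega
        rw [hz] at h
        by_cases ha1 : s₁ = a
        · by_cases hb1 : s₂ = b
          · subst ha1; subst hb1; exact hRab
          · simp [ha1, hb1] at h
        · simp [ha1] at h


lemma exists_nat_cast_mul (d : ℕ) (q : ℚ) (h0 : 0 ≤ q) (hd : q.den ∣ d) :
    ∃ n : ℕ, (n : ℚ) = (d : ℚ) * q := by
  obtain ⟨k, hk⟩ := hd
  refine ⟨k * q.num.toNat, ?_⟩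
  have hnum : (q.num.toNat : ℤ) = q.num := Int.toNat_of_nonneg (Rat.num_nonneg.mpr h0)
  have hq : (q.den : ℚ) * q = (q.num : ℚ) := by
    have h := Rat.num_div_den q
    have hden : ((q.den : ℚ)) ≠ 0 := by exact_mod_cast q.den_ne_zero
    rw [div_eq_iff hden] at h
    rw [mul_comm]
    exact h.symm
  have hc : ((k * q.num.toNat : ℕ) : ℚ) = (k : ℚ) * ((q.num.toNat : ℤ) : ℚ) := by
    push_cast; ring
  rw [hk, hc, hnum]
  push_cast
  rw [mul_comm (q.den : ℚ) (k : ℚ), mul_assoc, hq]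


/-- A discrete probability distribution on a finite set `S`, with rational values. -/
structure PDist (S : Type) [Fintype S] where
  prob : S → ℚ
  nonneg : ∀ s, 0 ≤ prob s
  sum_one : ∑ s, prob s = 1

/-- Hall-type characterization of the existence of a weight function:
there is a weight function `w : S₁ × S₂ → ℚ ∩ [0,1]` with marginals `μ₁`, `μ₂` and support
contained in `R` iff for every subset `T` of the support of `μ₁`, `μ₁(T) ≤ μ₂(R(T))`. -/
theorem weight_function_iff_hall
    {S₁ S₂ : Type} [Fintype S₁] [Fintype S₂] [Nonempty S₁] [Nonempty S₂]
    (μ₁ : PDist S₁) (μ₂ : PDist S₂) (R : S₁ → S₂ → Prop) :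
    (∃ w : S₁ → S₂ → ℚ,
      (∀ s₁ s₂, 0 ≤ w s₁ s₂ ∧ w s₁ s₂ ≤ 1) ∧
      (∀ s₁, μ₁.prob s₁ = ∑ s₂, w s₁ s₂) ∧
      (∀ s₂, μ₂.prob s₂ = ∑ s₁, w s₁ s₂) ∧
      (∀ s₁ s₂, 0 < w s₁ s₂ → R s₁ s₂)) ↔
    (∀ T : Finset S₁, (∀ s ∈ T, 0 < μ₁.prob s) →
      ∑ s ∈ T, μ₁.prob s ≤
        ∑ t ∈ Finset.univ.filter (fun t => ∃ s ∈ T, R s t), μ₂.prob t) := by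
  have hNR : ∀ T : Finset S₁, Finset.univ.filter (fun t => ∃ s ∈ T, R s t) = NRel R T :=
    fun T => rfl
  constructor
  · rintro ⟨w, hw01, hw1, hw2, hws⟩ T _
    rw [hNR]
    have key : ∀ s ∈ T, μ₁.prob s = ∑ t ∈ NRel R T, w s t := by
      intro s hs
      rw [hw1 s]
      symm
      apply Finset.sum_subset (Finset.subset_univ _)
      intro t _ htn
      by_contra h
      have hpos : 0 < w s t := lt_of_le_of_ne (hw01 s t).1 (Ne.symm h)
      exact htn ((mem_NRel R T t).mpr ⟨s, hs, hws s t hpos⟩)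
    calc ∑ s ∈ T, μ₁.prob s = ∑ s ∈ T, ∑ t ∈ NRel R T, w s t := Finset.sum_congr rfl key
    _ = ∑ t ∈ NRel R T, ∑ s ∈ T, w s t := Finset.sum_comm
    _ ≤ ∑ t ∈ NRel R T, ∑ s, w s t := by
        apply Finset.sum_le_sum
        intro t _
        exact Finset.sum_le_sum_of_subset_of_nonneg (Finset.subset_univ T)
          (fun s _ _ => (hw01 s t).1)
    _ = ∑ t ∈ NRel R T, μ₂.prob t := Finset.sum_congr rfl (fun t _ => (hw2 t).symm)
  · intro hall
    -- extend Hall to all subsets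
    have hallAll : ∀ T : Finset S₁, ∑ s ∈ T, μ₁.prob s ≤ ∑ t ∈ NRel R T, μ₂.prob t := by
      intro T
      set T' := T.filter (fun s => 0 < μ₁.prob s) with hT'
      have h1 : ∑ s ∈ T, μ₁.prob s = ∑ s ∈ T', μ₁.prob s := by
        symm
        apply Finset.sum_subset (Finset.filter_subset _ _)
        intro s hs hns
        rw [Finset.mem_filter] at hns
        push_neg at hns
        exact le_antisymm (hns hs) (μ₁.nonneg s)
      have h2 := hall T' (fun s hs => (Finset.mem_filter.mp hs).2)
      rw [hNR] at h2
      have h3 : ∑ t ∈ NRel R T', μ₂.prob t ≤ ∑ t ∈ NRel R T, μ₂.prob t :=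
        Finset.sum_le_sum_of_subset_of_nonneg (NRel_mono R (Finset.filter_subset _ _))
          (fun t _ _ => μ₂.nonneg t)
      rw [h1]
      exact h2.trans h3
    set d : ℕ := (∏ s, (μ₁.prob s).den) * (∏ t, (μ₂.prob t).den) with hd
    have hdpos : 0 < d := by
      apply Nat.mul_pos
      · exact Finset.prod_pos (fun s _ => (μ₁.prob s).pos)
      · exact Finset.prod_pos (fun t _ => (μ₂.prob t).pos)
    have hd1 : ∀ s, (μ₁.prob s).den ∣ d :=
      fun s => Dvd.dvd.mul_right (Finset.dvd_prod_of_mem _ (Finset.mem_univ s)) _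
    have hd2 : ∀ t, (μ₂.prob t).den ∣ d :=
      fun t => Dvd.dvd.mul_left (Finset.dvd_prod_of_mem _ (Finset.mem_univ t)) _
    choose ν₁ hν₁ using fun s => exists_nat_cast_mul d (μ₁.prob s) (μ₁.nonneg s) (hd1 s)
    choose ν₂ hν₂ using fun t => exists_nat_cast_mul d (μ₂.prob t) (μ₂.nonneg t) (hd2 t)
    have hdQ : ((d : ℚ)) ≠ 0 := by
      exact_mod_cast hdpos.ne'
    have htot1 : ∑ s, ν₁ s = d := by
      have : ((∑ s, ν₁ s : ℕ) : ℚ) = ((d : ℕ) : ℚ) := by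
        push_cast
        rw [Finset.sum_congr rfl (fun s _ => hν₁ s), ← Finset.mul_sum, μ₁.sum_one, mul_one]
      exact_mod_cast this
    have htot2 : ∑ t, ν₂ t = d := by
      have : ((∑ t, ν₂ t : ℕ) : ℚ) = ((d : ℕ) : ℚ) := by
        push_cast
        rw [Finset.sum_congr rfl (fun t _ => hν₂ t), ← Finset.mul_sum, μ₂.sum_one, mul_one]
      exact_mod_cast this
    have hallN : ∀ T : Finset S₁, ∑ s ∈ T, ν₁ s ≤ ∑ t ∈ NRel R T, ν₂ t := by
      intro T
      have : ((∑ s ∈ T, ν₁ s : ℕ) : ℚ) ≤ ((∑ t ∈ NRel R T, ν₂ t : ℕ) : ℚ) := by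
        push_cast
        rw [Finset.sum_congr rfl (fun s _ => hν₁ s), Finset.sum_congr rfl (fun t _ => hν₂ t),
          ← Finset.mul_sum, ← Finset.mul_sum]
        apply mul_le_mul_of_nonneg_left (hallAll T)
        positivity
      exact_mod_cast this
    obtain ⟨w', hw1', hw2', hws'⟩ := core_nat R d ν₁ ν₂ htot1 htot2 hallN
    refine ⟨fun x y => (w' x y : ℚ) / d, ?_, ?_, ?_, ?_⟩
    · intro s₁ s₂
      constructor
      · positivity
      · rw [div_le_one (by positivity)]
        have hle : w' s₁ s₂ ≤ d := by
          calc w' s₁ s₂ ≤ ∑ y, w' s₁ y :=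
                Finset.single_le_sum (fun y _ => Nat.zero_le _) (Finset.mem_univ s₂)
          _ = ν₁ s₁ := hw1' s₁
          _ ≤ ∑ s, ν₁ s := Finset.single_le_sum (fun s _ => Nat.zero_le _) (Finset.mem_univ s₁)
          _ = d := htot1
        exact_mod_cast hle
    · intro s₁
      rw [← Finset.sum_div]
      have : (∑ s₂, (w' s₁ s₂ : ℚ)) = (ν₁ s₁ : ℚ) := by
        exact_mod_cast congrArg (Nat.cast : ℕ → ℚ) (hw1' s₁)
      rw [this, hν₁ s₁, mul_comm, mul_div_assoc, div_self hdQ, mul_one]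
    · intro s₂
      rw [← Finset.sum_div]
      have : (∑ s₁, (w' s₁ s₂ : ℚ)) = (ν₂ s₂ : ℚ) := by
        exact_mod_cast congrArg (Nat.cast : ℕ → ℚ) (hw2' s₂)
      rw [this, hν₂ s₂, mul_comm, mul_div_assoc, div_self hdQ, mul_one]
    · intro s₁ s₂ h
      simp only at h
      apply hws' s₁ s₂
      have hq : (0:ℚ) < (w' s₁ s₂ : ℚ) := by
        by_contra hc
        push_neg at hc
        have hdq : (0:ℚ) < (d:ℚ) := by exact_mod_cast hdpos
        have : ((w' s₁ s₂ : ℚ)) / d ≤ 0 := div_nonpos_of_nonpos_of_nonneg hc (le_of_lt hdq)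
        linarith
      exact_mod_cast hq
end

section
/- The lifting of distributions by weight functions composes: if μ₁ ⊑_{R₁} μ₂ via relation R₁ ⊆ S₁ × S₂ and μ₂ ⊑_{R₂} μ₃ via relation R₂ ⊆ S₂ × S₃, then μ₁ ⊑_{R₂∘R₁} μ₃, where R₂∘R₁ = {(s₁,s₃) | ∃ s₂, (s₁,s₂) ∈ R₁ ∧ (s₂,s₃) ∈ R₂}. -/
open Finset

/-- The lifting `μ₁ ⊑_R μ₂` of a relation `R` to distributions, via a weight function. -/
def DistLe {S₁ S₂ : Type} [Fintype S₁] [Fintype S₂]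
    (R : S₁ → S₂ → Prop) (μ₁ : PDist S₁) (μ₂ : PDist S₂) : Prop :=
  ∃ w : S₁ → S₂ → ℚ,
    (∀ s₁ s₂, 0 ≤ w s₁ s₂ ∧ w s₁ s₂ ≤ 1) ∧
    (∀ s₁, μ₁.prob s₁ = ∑ s₂, w s₁ s₂) ∧
    (∀ s₂, μ₂.prob s₂ = ∑ s₁, w s₁ s₂) ∧
    (∀ s₁ s₂, 0 < w s₁ s₂ → R s₁ s₂)


/-- Lifting composes: `μ₁ ⊑_{R₁} μ₂` and `μ₂ ⊑_{R₂} μ₃` imply `μ₁ ⊑_{R₂∘R₁} μ₃`. -/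
theorem distLe_comp {S₁ S₂ S₃ : Type} [Fintype S₁] [Fintype S₂] [Fintype S₃]
    (R₁ : S₁ → S₂ → Prop) (R₂ : S₂ → S₃ → Prop)
    (μ₁ : PDist S₁) (μ₂ : PDist S₂) (μ₃ : PDist S₃)
    (h₁ : DistLe R₁ μ₁ μ₂) (h₂ : DistLe R₂ μ₂ μ₃) :
    DistLe (fun s₁ s₃ => ∃ s₂, R₁ s₁ s₂ ∧ R₂ s₂ s₃) μ₁ μ₃ := by
  classical
  obtain ⟨w₁, hw₁b, hw₁l, hw₁r, hw₁R⟩ := h₁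
  obtain ⟨w₂, hw₂b, hw₂l, hw₂r, hw₂R⟩ := h₂
  have h₁le : ∀ s₁ s₂, w₁ s₁ s₂ ≤ μ₂.prob s₂ := by
    intro s₁ s₂
    rw [hw₁r s₂]
    exact Finset.single_le_sum (fun i _ => (hw₁b i s₂).1) (Finset.mem_univ s₁)
  have hzero₁ : ∀ s₁ s₂, μ₂.prob s₂ = 0 → w₁ s₁ s₂ = 0 := fun s₁ s₂ h =>
    le_antisymm (h ▸ h₁le s₁ s₂) (hw₁b s₁ s₂).1
  set w : S₁ → S₃ → ℚ := fun s₁ s₃ =>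
    ∑ s₂, if μ₂.prob s₂ = 0 then 0 else w₁ s₁ s₂ * w₂ s₂ s₃ / μ₂.prob s₂ with hw
  have hterm_nonneg : ∀ s₁ s₂ s₃, (0:ℚ) ≤
      (if μ₂.prob s₂ = 0 then 0 else w₁ s₁ s₂ * w₂ s₂ s₃ / μ₂.prob s₂) := by
    intro s₁ s₂ s₃
    split
    · exact le_refl 0
    · next h =>
      have hpos : 0 < μ₂.prob s₂ := lt_of_le_of_ne (μ₂.nonneg s₂) (Ne.symm h)
      exact div_nonneg (mul_nonneg (hw₁b s₁ s₂).1 (hw₂b s₂ s₃).1) hpos.le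
  have hwnonneg : ∀ s₁ s₃, 0 ≤ w s₁ s₃ := fun s₁ s₃ =>
    Finset.sum_nonneg fun s₂ _ => hterm_nonneg s₁ s₂ s₃
  have hterm_le : ∀ s₁ s₂ s₃,
      (if μ₂.prob s₂ = 0 then 0 else w₁ s₁ s₂ * w₂ s₂ s₃ / μ₂.prob s₂) ≤ w₂ s₂ s₃ := by
    intro s₁ s₂ s₃
    split
    · exact (hw₂b s₂ s₃).1
    · next h =>
      have hpos : 0 < μ₂.prob s₂ := lt_of_le_of_ne (μ₂.nonneg s₂) (Ne.symm h)
      rw [div_le_iff₀ hpos]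
      calc w₁ s₁ s₂ * w₂ s₂ s₃ ≤ μ₂.prob s₂ * w₂ s₂ s₃ :=
            mul_le_mul_of_nonneg_right (h₁le s₁ s₂) (hw₂b s₂ s₃).1
        _ = w₂ s₂ s₃ * μ₂.prob s₂ := mul_comm _ _
  refine ⟨w, ?_, ?_, ?_, ?_⟩
  · intro s₁ s₃
    refine ⟨hwnonneg s₁ s₃, ?_⟩
    calc w s₁ s₃ ≤ ∑ s₂, w₂ s₂ s₃ :=
          Finset.sum_le_sum fun s₂ _ => hterm_le s₁ s₂ s₃
      _ = μ₃.prob s₃ := (hw₂r s₃).symm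
      _ ≤ 1 := by
          rw [← μ₃.sum_one]
          exact Finset.single_le_sum (fun i _ => μ₃.nonneg i) (Finset.mem_univ s₃)
  · intro s₁
    rw [hw₁l s₁]
    simp only [hw]
    rw [Finset.sum_comm]
    refine Finset.sum_congr rfl fun s₂ _ => ?_
    by_cases h : μ₂.prob s₂ = 0
    · simp [h, hzero₁ s₁ s₂ h]
    · simp only [h, if_false]
      rw [← Finset.sum_div, ← Finset.mul_sum, ← hw₂l s₂, mul_div_assoc,
        div_self h, mul_one]
  · intro s₃
    simp only [hw]
    rw [Finset.sum_comm, hw₂r s₃]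
    refine Finset.sum_congr rfl fun s₂ _ => ?_
    by_cases h : μ₂.prob s₂ = 0
    · have hsum : ∑ i, w₂ s₂ i = 0 := by rw [← hw₂l s₂]; exact h
      have hle : w₂ s₂ s₃ ≤ ∑ i, w₂ s₂ i :=
        Finset.single_le_sum (fun i _ => (hw₂b s₂ i).1) (Finset.mem_univ s₃)
      have h3 : w₂ s₂ s₃ = 0 := le_antisymm (hsum ▸ hle) (hw₂b s₂ s₃).1
      simp [h, h3]
    · simp only [h, if_false]
      rw [← Finset.sum_div, ← Finset.sum_mul, ← hw₁r s₂, mul_comm (μ₂.prob s₂),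
        mul_div_assoc, div_self h, mul_one]
  · intro s₁ s₃ hpos
    obtain ⟨s₂, _, hne⟩ :=
      Finset.exists_ne_zero_of_sum_ne_zero (f := fun s₂ =>
        if μ₂.prob s₂ = 0 then 0 else w₁ s₁ s₂ * w₂ s₂ s₃ / μ₂.prob s₂)
        (by simpa [hw] using hpos.ne')
    by_cases h : μ₂.prob s₂ = 0
    · simp [h] at hne
    · simp only [h, if_false] at hne
      have ht := hterm_nonneg s₁ s₂ s₃
      simp only [h, if_false] at ht
      have hpos' : 0 < w₁ s₁ s₂ * w₂ s₂ s₃ / μ₂.prob s₂ := lt_of_le_of_ne ht (Ne.symm hne)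
      have hmul : 0 < w₁ s₁ s₂ * w₂ s₂ s₃ := by
        have := mul_pos hpos' (lt_of_le_of_ne (μ₂.nonneg s₂) (Ne.symm h))
        rwa [div_mul_cancel₀ _ h] at this
      have h1 : 0 < w₁ s₁ s₂ := by
        rcases lt_or_eq_of_le (hw₁b s₁ s₂).1 with h' | h'
        · exact h'
        · rw [← h', zero_mul] at hmul; exact absurd hmul (lt_irrefl 0)
      have h2 : 0 < w₂ s₂ s₃ := by
        rcases lt_or_eq_of_le (hw₂b s₂ s₃).1 with h' | h'
        · exact h'
        · rw [← h', mul_zero] at hmul; exact absurd hmul (lt_irrefl 0)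
      exact ⟨s₂, hw₁R s₁ s₂ h1, hw₂R s₂ s₃ h2⟩
end

section
/- Let 𝒫 be a finite set of stochastic trees and L an LPTS with k states such that P ⪯ L for every P ∈ 𝒫. Then there exists a partition Π of S_𝒫 of size at most 2^k (with all start states in one class) such that 𝒫/Π ⪯ L. -/
open Finset

/-- A labeled probabilistic transition system over states `S` and actions `A`. -/
structure LPTS (S A : Type) [Fintype S] where
  start : S
  trans : S → A → PDist S → Prop

/-- `R` is a strong simulation between `L₁` and `L₂`. -/
def IsStrongSim {S₁ S₂ A : Type} [Fintype S₁] [Fintype S₂]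
    (L₁ : LPTS S₁ A) (L₂ : LPTS S₂ A) (R : S₁ → S₂ → Prop) : Prop :=
  ∀ s₁ s₂, R s₁ s₂ → ∀ a μ₁, L₁.trans s₁ a μ₁ →
    ∃ μ₂, L₂.trans s₂ a μ₂ ∧ DistLe R μ₁ μ₂

/-- `L₁ ⪯ L₂`: simulation conformance. -/
def Sim {S₁ S₂ A : Type} [Fintype S₁] [Fintype S₂]
    (L₁ : LPTS S₁ A) (L₂ : LPTS S₂ A) : Prop :=
  ∃ R, IsStrongSim L₁ L₂ R ∧ R L₁.start L₂.start

/-- A stochastic tree: the start state is in the support of no distribution, and every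
other state is in the support of exactly one distribution appearing in a transition. -/
def IsTree {S A : Type} [Fintype S] (L : LPTS S A) : Prop :=
  (∀ s a μ, L.trans s a μ → μ.prob L.start = 0) ∧
  (∀ t, t ≠ L.start → ∃! μ : PDist S, (∃ s a, L.trans s a μ) ∧ 0 < μ.prob t)

open scoped Classical

section Partition

variable {ι : Type} [Fintype ι] [Nonempty ι] {St : ι → Type} [∀ i, Fintype (St i)]
  {A : Type} {E : Type} [Fintype E]

/-- The lifting of a distribution on the states of tree `i` to the equivalence classes of a
partition, given by the class map `c`: `μ̄(e) = ∑_{s ∈ e} μ(s)`. -/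
noncomputable def liftDist (c : (Σ i, St i) → E) (i : ι) (μ : PDist (St i)) : E → ℚ :=
  fun e => ∑ s ∈ Finset.univ.filter (fun s => c ⟨i, s⟩ = e), μ.prob s

/-- The quotient LPTS `𝒫/Π` of a family of trees `P` by the partition with class map `c`. -/
noncomputable def quotLPTS (P : ∀ i, LPTS (St i) A) (c : (Σ i, St i) → E) : LPTS E A where
  start := c ⟨Classical.arbitrary ι, (P (Classical.arbitrary ι)).start⟩
  trans := fun e a ν => ∃ i s μ, (P i).trans s a μ ∧ c ⟨i, s⟩ = e ∧
    ∀ e', ν.prob e' = liftDist c i μ e'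

end Partition

/-- If `L` has `k` states and simulates every tree in the finite family `P`, then there is
a partition of the combined state space of size at most `2^k` (with all start states in
one class) whose quotient is simulated by `L`. -/
theorem exists_partition_quotient_sim {ι : Type} [Fintype ι] [Nonempty ι]
    {St : ι → Type} [∀ i, Fintype (St i)] {A SL : Type} [Fintype SL]
    (P : ∀ i, LPTS (St i) A) (htree : ∀ i, IsTree (P i))
    (L : LPTS SL A) (k : ℕ) (hk : Fintype.card SL = k)
    (hsim : ∀ i, Sim (P i) L) :
    ∃ (E : Type) (_ : Fintype E) (c : (Σ i, St i) → E),
      Function.Surjective c ∧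
      (∀ i j, c ⟨i, (P i).start⟩ = c ⟨j, (P j).start⟩) ∧
      Fintype.card E ≤ 2 ^ k ∧
      Sim (quotLPTS P c) L := by
  classical
  choose R hRsim hRstart using hsim
  -- modify each simulation so that the root relates exactly to L.start
  set R' : ∀ i, St i → SL → Prop :=
    fun i s t => if s = (P i).start then t = L.start else R i s t with hR'def
  have hR'start : ∀ i, ∀ t, R' i (P i).start t ↔ t = L.start := by
    intro i t; simp [hR'def]
  have hR'sim : ∀ i, IsStrongSim (P i) L (R' i) := by
    intro i s t hst a μ hμ
    have hst' : R i s t := by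
      by_cases h : s = (P i).start
      · have : t = L.start := by simpa [hR'def, h] using hst
        subst h; rw [this]; exact hRstart i
      · simpa [hR'def, h] using hst
    obtain ⟨μ₂, hμ₂, w, hw01, hw1, hw2, hwR⟩ := hRsim i s t hst' a μ hμ
    refine ⟨μ₂, hμ₂, w, hw01, hw1, hw2, ?_⟩
    intro s₁ t₁ hpos
    have hs₁ : s₁ ≠ (P i).start := by
      rintro rfl
      have h0 : ∑ t', w (P i).start t' = 0 := by
        rw [← hw1]; exact (htree i).1 s a μ hμ
      have := (Finset.sum_eq_zero_iff_of_nonneg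
        (fun t' _ => (hw01 _ t').1)).mp h0 t₁ (Finset.mem_univ _)
      linarith
    simpa [hR'def, hs₁] using hwR s₁ t₁ hpos
  -- class map: image under R'
  set c₀ : (Σ i, St i) → Finset SL :=
    fun x => Finset.univ.filter (fun t => R' x.1 x.2 t) with hc₀def
  refine ⟨{T : Finset SL // ∃ x, c₀ x = T}, inferInstance,
    fun x => ⟨c₀ x, x, rfl⟩, ?_, ?_, ?_, ?_⟩
  · rintro ⟨T, x, rfl⟩; exact ⟨x, rfl⟩
  · intro i j
    apply Subtype.ext
    simp only [hc₀def]
    ext t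
    simp [hR'start]
  · calc Fintype.card {T : Finset SL // ∃ x, c₀ x = T}
        ≤ Fintype.card (Finset SL) :=
          Fintype.card_le_of_injective Subtype.val Subtype.val_injective
      _ = 2 ^ k := by rw [Fintype.card_finset, hk]
  · -- the simulation on the quotient
    set E := {T : Finset SL // ∃ x, c₀ x = T}
    set c : (Σ i, St i) → E := fun x => ⟨c₀ x, x, rfl⟩ with hcdef
    refine ⟨fun e t => t ∈ e.val, ?_, ?_⟩
    · rintro e t hte a ν ⟨i, s, μ, hμ, hce, hν⟩
      have hst : R' i s t := by
        have : t ∈ c₀ ⟨i, s⟩ := by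
          rw [show c₀ ⟨i, s⟩ = e.val from congrArg Subtype.val hce]; exact hte
        simpa [hc₀def] using this
      obtain ⟨μ₂, hμ₂, w, hw01, hw1, hw2, hwR⟩ := hR'sim i s t hst a μ hμ
      refine ⟨μ₂, hμ₂,
        fun e' t' => ∑ s' ∈ Finset.univ.filter (fun s' => c ⟨i, s'⟩ = e'), w s' t',
        ?_, ?_, ?_, ?_⟩
      · intro e' t'
        constructor
        · exact Finset.sum_nonneg fun s' _ => (hw01 s' t').1
        · calc ∑ s' ∈ Finset.univ.filter (fun s' => c ⟨i, s'⟩ = e'), w s' t'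
              ≤ ∑ s', w s' t' := Finset.sum_le_sum_of_subset_of_nonneg
                (Finset.filter_subset _ _) (fun s' _ _ => (hw01 s' t').1)
            _ = μ₂.prob t' := (hw2 t').symm
            _ ≤ 1 := by
              rw [← μ₂.sum_one]
              exact Finset.single_le_sum (fun x _ => μ₂.nonneg x) (Finset.mem_univ t')
      · intro e'
        rw [hν e', liftDist]
        rw [Finset.sum_comm]
        refine Finset.sum_congr (by congr) fun s' _ => hw1 s'
      · intro t'
        rw [hw2 t']
        have := (Finset.sum_fiberwise Finset.univ (fun s' => c ⟨i, s'⟩)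
          (fun s' => w s' t')).symm
        convert this using 2 with e'
      · intro e' t' hpos
        obtain ⟨s', hs'mem, hs'pos⟩ : ∃ s' ∈ Finset.univ.filter
            (fun s' => c ⟨i, s'⟩ = e'), 0 < w s' t' := by
          by_contra h
          push_neg at h
          have : ∑ s' ∈ Finset.univ.filter (fun s' => c ⟨i, s'⟩ = e'), w s' t' ≤ 0 :=
            Finset.sum_nonpos fun s' hs' => le_of_not_gt fun hlt =>
              absurd hlt (not_lt_of_ge (h s' hs'))
          linarith
        have hR's' : R' i s' t' := hwR s' t' hs'pos
        have hce' : c₀ ⟨i, s'⟩ = e'.val := by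
          have := (Finset.mem_filter.mp hs'mem).2
          exact congrArg Subtype.val this
        rw [← hce']
        simpa [hc₀def] using hR's'
    · -- start condition
      show L.start ∈ ((quotLPTS P c).start).val
      have : (quotLPTS P c).start = c ⟨Classical.arbitrary ι,
          (P (Classical.arbitrary ι)).start⟩ := rfl
      rw [this]
      simp [hcdef, hc₀def, hR'start]
end
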